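/- Let H be a real symmetric d×d matrix and g ∈ ℝ^d a nonzero vector. Then the grade of g with respect to H equals the number of g-relevant eigenvalues of H; that is, the dimension of the full Krylov space span{H^i g : i ≥ 0} equals the number of eigenvalues λ of H whose eigenspace ker(H − λI) is not orthogonal to g. -/

import Mathlib

open Matrix

/-- The Krylov subspace of degree `t`: span of `g, Hg, …, H^{t-1} g`. -/
noncomputable def Krylov {d : ℕ} (H : Matrix (Fin d) (Fin d) ℝ) (g : Fin d → ℝ) (t : ℕ) :
    Submodule ℝ (Fin d → ℝ) :=
  Submodule.span ℝ ((fun i : ℕ => (H ^ i) *ᵥ g) '' Set.Iio t)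

/-- The full Krylov space: span of `{H^i g : i ≥ 0}`. -/
noncomputable def KrylovFull {d : ℕ} (H : Matrix (Fin d) (Fin d) ℝ) (g : Fin d → ℝ) :
    Submodule ℝ (Fin d → ℝ) :=
  Submodule.span ℝ (Set.range fun i : ℕ => (H ^ i) *ᵥ g)

/-- `lam` is a `g`-relevant eigenvalue of `H`: `g` is not orthogonal to `ker (H - lam I)`. -/
def gRelevant {d : ℕ} (H : Matrix (Fin d) (Fin d) ℝ) (g : Fin d → ℝ) (lam : ℝ) : Prop :=
  ∃ v : Fin d → ℝ, H *ᵥ v = lam • v ∧ v ⬝ᵥ g ≠ 0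

/-- The Euclidean norm of a vector. -/
noncomputable def vnorm {d : ℕ} (x : Fin d → ℝ) : ℝ := Real.sqrt (x ⬝ᵥ x)

/-- The grade of `g` with respect to `H` (the dimension of the full Krylov space)
equals the number of `g`-relevant eigenvalues of `H`. -/
theorem grade_eq_ncard_gRelevant {d : ℕ} (H : Matrix (Fin d) (Fin d) ℝ)
    (hH : H.IsSymm) (g : Fin d → ℝ) (hg : g ≠ 0) :
    Module.finrank ℝ (KrylovFull H g) = {lam : ℝ | gRelevant H g lam}.ncard := by
    classical
  have hH' : H.IsHermitian := by
    rw [Matrix.IsHermitian, Matrix.conjTranspose_eq_transpose_of_trivial]; exact hH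
  set μ : Fin d → ℝ := hH'.eigenvalues with hμ
  set u : Fin d → (Fin d → ℝ) := fun i => ⇑(hH'.eigenvectorBasis i) with hu
  set c : Fin d → ℝ := fun i => u i ⬝ᵥ g with hc
  have heig : ∀ i, H *ᵥ u i = μ i • u i := fun i => hH'.mulVec_eigenvectorBasis i
  have hortho : ∀ i j, u i ⬝ᵥ u j = if i = j then 1 else 0 := by
    intro i j
    have h := orthonormal_iff_ite.mp hH'.eigenvectorBasis.orthonormal i j
    simpa [PiLp.inner_apply, dotProduct, RCLike.inner_apply, mul_comm] using h
  have hg_expand : g = ∑ i, c i • u i := by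
    have h := hH'.eigenvectorBasis.sum_repr' ((WithLp.linearEquiv 2 ℝ (Fin d → ℝ)).symm g)
    have h2 := congrArg (WithLp.linearEquiv 2 ℝ (Fin d → ℝ)) h
    rw [map_sum, (WithLp.linearEquiv 2 ℝ (Fin d → ℝ)).apply_symm_apply] at h2
    simp only [LinearEquiv.map_smul] at h2
    rw [← h2]
    apply Finset.sum_congr rfl
    intro i _
    congr 1
    simp [hc, hu, PiLp.inner_apply, dotProduct, mul_comm]
  -- index sets
  set s : Finset (Fin d) := Finset.univ.filter (fun i => c i ≠ 0) with hsdef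
  set E : Finset ℝ := s.image μ with hEdef
  set w : ℝ → (Fin d → ℝ) := fun lam => ∑ i ∈ s.filter (fun i => μ i = lam), c i • u i with hwdef
  -- helper: sums and mulVec
  have mulVec_sum' : ∀ (M : Matrix (Fin d) (Fin d) ℝ) {ι : Type} (t : Finset ι)
      (f : ι → (Fin d → ℝ)), M *ᵥ (∑ i ∈ t, f i) = ∑ i ∈ t, M *ᵥ f i := by
    intro M ι t f
    simpa only [Matrix.mulVecLin_apply] using map_sum M.mulVecLin f t
  have sum_dot : ∀ {ι : Type} (t : Finset ι) (f : ι → (Fin d → ℝ)) (y : Fin d → ℝ),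
      (∑ i ∈ t, f i) ⬝ᵥ y = ∑ i ∈ t, f i ⬝ᵥ y := by
    intro ι t f y
    simp [dotProduct, Finset.sum_apply, Finset.sum_mul]
    rw [Finset.sum_comm]
  -- grouping
  have hgroup : ∀ F : ℝ → ℝ, ∑ i, (c i * F (μ i)) • u i = ∑ lam ∈ E, F lam • w lam := by
    intro F
    have h1 : ∀ lam ∈ E, F lam • w lam
        = ∑ i ∈ s.filter (fun i => μ i = lam), (c i * F (μ i)) • u i := by
      intro lam _
      rw [hwdef, Finset.smul_sum]
      apply Finset.sum_congr rfl
      intro i hi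
      rw [Finset.mem_filter] at hi
      rw [hi.2, smul_smul, mul_comm]
    rw [Finset.sum_congr rfl h1, Finset.sum_fiberwise_of_maps_to (g := μ) (t := E)
      (fun i hi => Finset.mem_image_of_mem μ hi)]
    refine (Finset.sum_subset (Finset.subset_univ s) ?_).symm
    intro i _ hi
    rw [hsdef] at hi
    simp only [Finset.mem_filter, Finset.mem_univ, true_and, not_not] at hi
    rw [hi, zero_mul, zero_smul]
  have hkey : ∀ (M : Matrix (Fin d) (Fin d) ℝ) (F : ℝ → ℝ),
      (∀ i, M *ᵥ u i = F (μ i) • u i) → M *ᵥ g = ∑ lam ∈ E, F lam • w lam := by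
    intro M F hMF
    rw [← hgroup F]
    conv_lhs => rw [hg_expand]
    rw [mulVec_sum']
    apply Finset.sum_congr rfl
    intro i _
    rw [Matrix.mulVec_smul, hMF i, smul_smul]
  have hpowu : ∀ (k : ℕ) (i : Fin d), (H ^ k) *ᵥ u i = μ i ^ k • u i := by
    intro k i
    induction k with
    | zero => simp
    | succ n ih =>
      rw [pow_succ, ← Matrix.mulVec_mulVec, heig i, Matrix.mulVec_smul, ih, smul_smul,
        pow_succ']
  have hpow : ∀ k : ℕ, (H ^ k) *ᵥ g = ∑ lam ∈ E, lam ^ k • w lam :=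
    fun k => hkey (H ^ k) (· ^ k) (hpowu k)
  have haevalu : ∀ (p : Polynomial ℝ) (i : Fin d),
      (Polynomial.aeval H p) *ᵥ u i = p.eval (μ i) • u i := by
    intro p i
    induction p using Polynomial.induction_on' with
    | add p q hp hq => rw [map_add, Matrix.add_mulVec, hp, hq, Polynomial.eval_add, add_smul]
    | monomial n a =>
      rw [Polynomial.aeval_monomial, Polynomial.eval_monomial,
        Algebra.algebraMap_eq_smul_one, smul_mul_assoc, one_mul,
        Matrix.smul_mulVec, hpowu n i, smul_smul]
  have haeval2 : ∀ p : Polynomial ℝ,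
      (Polynomial.aeval H p) *ᵥ g = ∑ lam ∈ E, p.eval lam • w lam :=
    fun p => hkey _ _ (haevalu p)
  have haeval_mem : ∀ p : Polynomial ℝ, (Polynomial.aeval H p) *ᵥ g ∈ KrylovFull H g := by
    intro p
    induction p using Polynomial.induction_on' with
    | add p q hp hq => rw [map_add, Matrix.add_mulVec]; exact add_mem hp hq
    | monomial n a =>
      rw [Polynomial.aeval_monomial, Algebra.algebraMap_eq_smul_one, smul_mul_assoc, one_mul,
        Matrix.smul_mulVec]
      exact Submodule.smul_mem _ _ (Submodule.subset_span ⟨n, rfl⟩)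
  have hspan : KrylovFull H g = Submodule.span ℝ (w '' ↑E) := by
    apply le_antisymm
    · rw [KrylovFull, Submodule.span_le]
      rintro x ⟨k, rfl⟩
      simp only
      rw [hpow k]
      exact Submodule.sum_mem _ fun lam hlam =>
        Submodule.smul_mem _ _ (Submodule.subset_span ⟨lam, hlam, rfl⟩)
    · rw [Submodule.span_le]
      rintro x ⟨lam, hlam, rfl⟩
      have hElam : lam ∈ E := hlam
      have h : (Polynomial.aeval H (Lagrange.basis E id lam)) *ᵥ g = w lam := by
        rw [haeval2, Finset.sum_eq_single lam]
        · rw [show (Lagrange.basis E id lam).eval lam = 1 from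
            Lagrange.eval_basis_self (Set.injOn_id _) hElam, one_smul]
        · intro b hb hne
          rw [show (Lagrange.basis E id lam).eval b = 0 from
            Lagrange.eval_basis_of_ne (v := id) (i := lam) (j := b) (fun h => hne h.symm) hb,
            zero_smul]
        · intro h; exact absurd hElam h
      rw [← h]
      exact haeval_mem _
  have hwdot : ∀ (lam : ℝ) (j : Fin d), j ∈ s →
      w lam ⬝ᵥ u j = if μ j = lam then c j else 0 := by
    intro lam j hj
    rw [hwdef]
    simp only
    rw [sum_dot]
    by_cases hcase : μ j = lam
    · rw [if_pos hcase, Finset.sum_eq_single j]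
      · rw [smul_dotProduct, hortho, if_pos rfl, smul_eq_mul, mul_one]
      · intro i hi hne
        rw [smul_dotProduct, hortho, if_neg hne, smul_eq_mul, mul_zero]
      · intro hns
        exact absurd (Finset.mem_filter.mpr ⟨hj, hcase⟩) hns
    · rw [if_neg hcase]
      apply Finset.sum_eq_zero
      intro i hi
      have hine : i ≠ j := by
        rintro rfl
        exact hcase (Finset.mem_filter.mp hi).2
      rw [smul_dotProduct, hortho, if_neg hine, smul_eq_mul, mul_zero]
  have hw_li : LinearIndependent ℝ (fun lam : {x // x ∈ E} => w ↑lam) := by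
    rw [Fintype.linearIndependent_iff]
    intro f hf lam0
    obtain ⟨j, hjs, hjlam⟩ : ∃ j ∈ s, μ j = ↑lam0 := by
      obtain ⟨j, hj, hjl⟩ := Finset.mem_image.mp lam0.2
      exact ⟨j, hj, hjl⟩
    have hdot := congrArg (fun x => x ⬝ᵥ u j) hf
    simp only [zero_dotProduct] at hdot
    rw [sum_dot] at hdot
    have : ∀ lam ∈ Finset.univ (α := {x // x ∈ E}),
        (f lam • w ↑lam) ⬝ᵥ u j = if lam = lam0 then f lam0 * c j else 0 := by
      intro lam _
      rw [smul_dotProduct, hwdot _ j hjs, smul_eq_mul]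
      by_cases h : lam = lam0
      · rw [if_pos h, h, if_pos hjlam]
      · rw [if_neg h, if_neg, mul_zero]
        rw [hjlam]
        intro hcon
        exact h (Subtype.ext hcon.symm)
    rw [Finset.sum_congr rfl this, Finset.sum_ite_eq' Finset.univ lam0
      (fun _ => f lam0 * c j), if_pos (Finset.mem_univ _)] at hdot
    have hcj : c j ≠ 0 := by
      rw [hsdef, Finset.mem_filter] at hjs
      exact hjs.2
    exact (mul_eq_zero.mp hdot).resolve_right hcj
  have hset : {lam : ℝ | gRelevant H g lam} = (↑E : Set ℝ) := by
    have hsym : ∀ x y : Fin d → ℝ, (H *ᵥ x) ⬝ᵥ y = x ⬝ᵥ (H *ᵥ y) := by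
      intro x y
      rw [Matrix.dotProduct_mulVec, ← Matrix.mulVec_transpose, hH.eq]
    ext lam
    simp only [Set.mem_setOf_eq, Finset.coe_image, Set.mem_image, hEdef, Finset.mem_coe]
    constructor
    · rintro ⟨v, hv, hvg⟩
      by_contra hnot
      apply hvg
      have hnot' : ∀ i, i ∈ s → μ i ≠ lam := by
        intro i hi hcon
        exact hnot ⟨i, hi, hcon⟩
      conv_lhs => rw [hg_expand]
      rw [show ∀ y : Fin d → ℝ, v ⬝ᵥ y = y ⬝ᵥ v from fun y => dotProduct_comm v y]
      rw [sum_dot]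
      apply Finset.sum_eq_zero
      intro i _
      rw [smul_dotProduct, smul_eq_mul]
      by_cases hci : c i = 0
      · rw [hci, zero_mul]
      · have his : i ∈ s := by rw [hsdef]; exact Finset.mem_filter.mpr ⟨Finset.mem_univ _, hci⟩
        have hmu : μ i ≠ lam := hnot' i his
        have h1 : lam * (u i ⬝ᵥ v) = μ i * (u i ⬝ᵥ v) := by
          calc lam * (u i ⬝ᵥ v) = u i ⬝ᵥ (lam • v) := by
                rw [dotProduct_smul, smul_eq_mul]
            _ = u i ⬝ᵥ (H *ᵥ v) := by rw [hv]
            _ = (H *ᵥ u i) ⬝ᵥ v := (hsym (u i) v).symm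
            _ = μ i * (u i ⬝ᵥ v) := by
                rw [heig i, smul_dotProduct, smul_eq_mul]
        have h2 : u i ⬝ᵥ v = 0 := by
          by_contra hne
          exact hmu (mul_right_cancel₀ hne h1).symm
        rw [h2, mul_zero]
    · rintro ⟨i, his, rfl⟩
      refine ⟨u i, heig i, ?_⟩
      rw [hsdef, Finset.mem_filter] at his
      exact his.2
  rw [hset, Set.ncard_coe_finset, hspan]
  have hrange : Set.range (fun lam : {x // x ∈ E} => w ↑lam) = w '' ↑E := by
    ext x
    simp [Set.mem_image]
  rw [← hrange, finrank_span_eq_card hw_li, Fintype.card_coe]
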